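/- For each n, let N_n be a finite node set with |N_n| → ∞, g_n : N_n → G a group assignment onto a fixed finite set G, and let (θ_i^{o}, θ_i^{i})_{i∈N_n} and (ω_{rs})_{r,s∈G} be positive DCSBM parameters (depending on n) with Σ_{i : g_n i = r} θ_i^o = 1 and Σ_{i : g_n i = r} θ_i^i = 1 for all r ∈ G. Let μ_min(n) be the minimum over all i ∈ N_n and s ∈ G of θ_i^o ω_{g_n i, s} and θ_i^i ω_{s, g_n i}, and assume |N_n| / μ_min(n) → 0 as n → ∞ (a quantitative form of the condition that every expected group-degree tends to infinity). Let λ̂_n be the log-likelihood ratio statistic computed from a sampled adjacency matrix with independent Poisson entries of mean θ_i^o θ_j^i ω_{g_n i, g_n j} via λ̂_n = Σ_{i,s} [ d_{i,s}^o log d_{i,s}^o + d_{i,s}^i log d_{i,s}^i ] − Σ_i [ d_i^o log d_i^o + d_i^i log d_i^i ] − Σ_{r,s} 2 m_{rs} log m_{rs} + Σ_r [ d_r^o log d_r^o + d_r^i log d_r^i ] (with 0 log 0 = 0). Then E[λ̂_n] − (|G| − 1)(|N_n| − |G|) → 0 as n → ∞. -/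

import Mathlib

open MeasureTheory ProbabilityTheory Filter
open scoped ProbabilityTheory NNReal

/-- `x log x`, extended by `0 log 0 = 0` (note `Real.log 0 = 0`). -/
noncomputable def xlog (x : ℝ) : ℝ := x * Real.log x

/-- Out-degree of node `i` to group `s`: `d_{i,s}^o = ∑_{j : g j = s} A i j`. -/
def dOut {N G : Type*} [Fintype N] [DecidableEq G] (g : N → G) (a : N → N → ℕ)
    (i : N) (s : G) : ℕ := ∑ j ∈ Finset.univ.filter (fun j => g j = s), a i j

/-- In-degree of node `i` from group `s`: `d_{i,s}^i = ∑_{j : g j = s} A j i`. -/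
def dIn {N G : Type*} [Fintype N] [DecidableEq G] (g : N → G) (a : N → N → ℕ)
    (i : N) (s : G) : ℕ := ∑ j ∈ Finset.univ.filter (fun j => g j = s), a j i

/-- Total out-degree of node `i`: `d_i^o = ∑_j A i j`. -/
def dTotOut {N : Type*} [Fintype N] (a : N → N → ℕ) (i : N) : ℕ := ∑ j : N, a i j

/-- Total in-degree of node `i`: `d_i^i = ∑_j A j i`. -/
def dTotIn {N : Type*} [Fintype N] (a : N → N → ℕ) (i : N) : ℕ := ∑ j : N, a j i

/-- Total out-degree of group `r`: `d_r^o = ∑_{i : g i = r} d_i^o`. -/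
def dGrpOut {N G : Type*} [Fintype N] [DecidableEq G] (g : N → G) (a : N → N → ℕ)
    (r : G) : ℕ := ∑ i ∈ Finset.univ.filter (fun i => g i = r), dTotOut a i

/-- Total in-degree of group `r`: `d_r^i = ∑_{i : g i = r} d_i^i`. -/
def dGrpIn {N G : Type*} [Fintype N] [DecidableEq G] (g : N → G) (a : N → N → ℕ)
    (r : G) : ℕ := ∑ i ∈ Finset.univ.filter (fun i => g i = r), dTotIn a i

/-- Number of edges from group `r` to group `s`. -/
def mEdges {N G : Type*} [Fintype N] [DecidableEq G] (g : N → G) (a : N → N → ℕ)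
    (r s : G) : ℕ :=
  ∑ i ∈ Finset.univ.filter (fun i => g i = r),
    ∑ j ∈ Finset.univ.filter (fun j => g j = s), a i j

/-- The log-likelihood-ratio statistic `λ̂` of the mixed-propensity model against DCSBM,
computed from an adjacency matrix `a` (with the convention `0 log 0 = 0`). -/
noncomputable def llrStat {N G : Type*} [Fintype N] [Fintype G] [DecidableEq G]
    (g : N → G) (a : N → N → ℕ) : ℝ :=
  (∑ i : N, ∑ s : G, (xlog (dOut g a i s : ℝ) + xlog (dIn g a i s : ℝ)))
    - (∑ i : N, (xlog (dTotOut a i : ℝ) + xlog (dTotIn a i : ℝ)))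
    - (∑ r : G, ∑ s : G, 2 * xlog (mEdges g a r s : ℝ))
    + (∑ r : G, (xlog (dGrpOut g a r : ℝ) + xlog (dGrpIn g a r : ℝ)))


section PoissonAux
open scoped ENNReal
open ProbabilityTheory
set_option maxHeartbeats 1000000

noncomputable def pp (r : ℝ≥0) (k : ℕ) : ℝ := Real.exp (-(r:ℝ)) * (r:ℝ)^k / (Nat.factorial k)

lemma pp_eq (r : ℝ≥0) : pp r = poissonPMFReal r := rfl

lemma pp_nonneg (r : ℝ≥0) (k : ℕ) : 0 ≤ pp r k := by unfold pp; positivity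

lemma pp_hasSum (r : ℝ≥0) : HasSum (pp r) 1 := poissonPMFRealSum r

lemma poisson_singleton (r : ℝ≥0) (k : ℕ) :
    poissonMeasure r {k} = ENNReal.ofReal (pp r k) := by
  rw [poissonMeasure_singleton]
  rfl

lemma pp_conv (a b : ℝ≥0) (n : ℕ) :
    ∑ k ∈ Finset.range (n+1), pp a k * pp b (n - k) = pp (a + b) n := by
  have h1 : ∀ k ∈ Finset.range (n+1), pp a k * pp b (n-k)
      = Real.exp (-((a:ℝ)+(b:ℝ))) / (Nat.factorial n) *
        ((a:ℝ)^k * (b:ℝ)^(n-k) * (n.choose k : ℝ)) := by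
    intro k hk
    have hk' : k ≤ n := Nat.lt_succ_iff.mp (Finset.mem_range.mp hk)
    have hfac : ((n.choose k : ℝ)) * (Nat.factorial k : ℝ) * (Nat.factorial (n-k) : ℝ)
        = (Nat.factorial n : ℝ) := by
      exact_mod_cast congrArg (Nat.cast : ℕ → ℝ) (Nat.choose_mul_factorial_mul_factorial hk')
    have e3 : Real.exp (-(a:ℝ)) * Real.exp (-(b:ℝ)) = Real.exp (-(b:ℝ)-(a:ℝ)) := by
      rw [← Real.exp_add]; ring_nf
    have h0 : (Nat.factorial k : ℝ) ≠ 0 := Nat.cast_ne_zero.mpr (Nat.factorial_ne_zero k)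
    have h1 : (Nat.factorial (n-k) : ℝ) ≠ 0 := Nat.cast_ne_zero.mpr (Nat.factorial_ne_zero _)
    have h2 : (Nat.factorial n : ℝ) ≠ 0 := Nat.cast_ne_zero.mpr (Nat.factorial_ne_zero n)
    unfold pp
    field_simp
    rw [show -(b:ℝ)-(a:ℝ) = -((a:ℝ)+(b:ℝ)) by ring] at e3
    linear_combination ((a:ℝ)^k * (b:ℝ)^(n-k) * (Nat.factorial n : ℝ)) * e3
      - ((a:ℝ)^k * (b:ℝ)^(n-k) * Real.exp (-((a:ℝ)+(b:ℝ)))) * hfac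
  rw [Finset.sum_congr rfl h1, ← Finset.mul_sum]
  unfold pp
  push_cast
  rw [add_pow]
  ring

lemma poisson_zero : poissonMeasure 0 = Measure.dirac 0 := by
  refine Measure.ext_of_singleton fun n => ?_
  rw [poisson_singleton]
  cases n with
  | zero => simp [pp]
  | succ m => simp [pp, Measure.dirac_apply', Set.indicator]

lemma poisson_conv (a b : ℝ≥0) :
    Measure.map (fun p : ℕ × ℕ => p.1 + p.2) ((poissonMeasure a).prod (poissonMeasure b))
      = poissonMeasure (a + b) := by
  refine Measure.ext_of_singleton fun n => ?_
  rw [Measure.map_apply (by fun_prop : Measurable fun p : ℕ × ℕ => p.1 + p.2) (measurableSet_singleton n)]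
  have hset : (fun p : ℕ × ℕ => p.1 + p.2) ⁻¹' {n}
      = ⋃ k ∈ Finset.range (n+1), (({k} : Set ℕ) ×ˢ ({n - k} : Set ℕ)) := by
    ext ⟨x, y⟩
    simp only [Set.mem_preimage, Set.mem_singleton_iff, Set.mem_iUnion, Set.mem_prod,
      Finset.mem_range, Nat.lt_succ_iff]
    constructor
    · rintro rfl
      exact ⟨x, Nat.le_add_right _ _, rfl, by omega⟩
    · rintro ⟨k, hk, rfl, rfl⟩
      omega
  have hdisj : (↑(Finset.range (n+1)) : Set ℕ).PairwiseDisjoint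
      (fun k => (({k} : Set ℕ) ×ˢ ({n - k} : Set ℕ))) := by
    intro x hx y hy hxy
    rw [Function.onFun, Set.disjoint_left]
    rintro ⟨u, v⟩ ⟨hu, hv⟩ ⟨hu', hv'⟩
    exact hxy (by simp_all)
  have hmeas : ∀ k ∈ Finset.range (n+1),
      MeasurableSet (({k} : Set ℕ) ×ˢ ({n - k} : Set ℕ)) := fun k _ =>
    (measurableSet_singleton _).prod (measurableSet_singleton _)
  rw [hset, measure_biUnion_finset hdisj hmeas]
  have hterm : ∀ k ∈ Finset.range (n+1),
      (poissonMeasure a).prod (poissonMeasure b) (({k} : Set ℕ) ×ˢ ({n - k} : Set ℕ))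
        = ENNReal.ofReal (pp a k * pp b (n - k)) := by
    intro k _
    rw [Measure.prod_prod, poisson_singleton, poisson_singleton,
      ← ENNReal.ofReal_mul (pp_nonneg _ _)]
  rw [Finset.sum_congr rfl hterm,
    ← ENNReal.ofReal_sum_of_nonneg (fun k _ => mul_nonneg (pp_nonneg _ _) (pp_nonneg _ _)),
    pp_conv, poisson_singleton]

lemma map_add_poisson {Ω : Type*} [MeasurableSpace Ω] {μ : Measure Ω} [IsProbabilityMeasure μ]
    {X Y : Ω → ℕ} (hX : Measurable X) (hY : Measurable Y) (h : IndepFun X Y μ)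
    {a b : ℝ≥0} (ha : μ.map X = poissonMeasure a) (hb : μ.map Y = poissonMeasure b) :
    μ.map (fun ω => X ω + Y ω) = poissonMeasure (a + b) := by
  have hmap : μ.map (fun ω => (X ω, Y ω)) = (μ.map X).prod (μ.map Y) :=
    (indepFun_iff_map_prod_eq_prod_map_map hX.aemeasurable hY.aemeasurable).mp h
  have hc : (fun ω => X ω + Y ω) = (fun p : ℕ × ℕ => p.1 + p.2) ∘ (fun ω => (X ω, Y ω)) := rfl
  rw [hc, ← Measure.map_map (by fun_prop : Measurable fun p : ℕ × ℕ => p.1 + p.2) (hX.prodMk hY), hmap, ha, hb,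
    poisson_conv]

lemma map_sum_poisson {Ω ι : Type*} [MeasurableSpace Ω] {μ : Measure Ω} [IsProbabilityMeasure μ]
    {X : ι → Ω → ℕ} (hX : ∀ i, Measurable (X i))
    (hind : iIndepFun X μ)
    (lam : ι → ℝ≥0) (T : Finset ι) (hlaw : ∀ i ∈ T, μ.map (X i) = poissonMeasure (lam i)) :
    μ.map (fun ω => ∑ i ∈ T, X i ω) = poissonMeasure (∑ i ∈ T, lam i) := by
  classical
  induction T using Finset.induction_on with
  | empty =>
      simp only [Finset.sum_empty]
      rw [Measure.map_const, measure_univ, one_smul, poisson_zero]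
  | @insert a s hnotmem ih =>
      have hsum : (fun ω => ∑ i ∈ insert a s, X i ω) = fun ω => X a ω + ∑ i ∈ s, X i ω :=
        funext fun ω => Finset.sum_insert hnotmem
      have hindep2 : IndepFun (X a) (fun ω => ∑ i ∈ s, X i ω) μ := by
        have := (hind.indepFun_finset_sum_of_notMem hX hnotmem).symm
        convert this using 1
        ext ω; simp
      rw [hsum, Finset.sum_insert hnotmem,
        map_add_poisson (hX a) (by exact Finset.measurable_sum s (fun i _ => hX i)) hindep2
          (hlaw a (Finset.mem_insert_self a s))
          (ih (fun i hi => hlaw i (Finset.mem_insert_of_mem hi)))]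

private lemma hs_trans {f g : ℕ → ℝ} {a b : ℝ} (h : HasSum f a) (hfg : ∀ k, g k = f k)
    (hab : b = a) : HasSum g b := by
  rw [hab, show g = f from funext hfg]; exact h

lemma pp_succ_mul (r : ℝ≥0) (m : ℕ) : pp r (m+1) * ((m:ℝ)+1) = (r:ℝ) * pp r m := by
  unfold pp
  rw [Nat.factorial_succ]
  have h0 : (Nat.factorial m : ℝ) ≠ 0 := Nat.cast_ne_zero.mpr (Nat.factorial_ne_zero m)
  have h1 : ((m:ℝ)+1) ≠ 0 := by positivity
  push_cast
  field_simp
  ring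

noncomputable def ffp (j k : ℕ) : ℝ := ∏ t ∈ Finset.range j, ((k:ℝ) - (t:ℝ))

lemma hasSum_pp_ffp (r : ℝ≥0) : ∀ j, HasSum (fun k => pp r k * ffp j k) ((r:ℝ)^j) := by
  intro j
  induction j with
  | zero =>
      simp only [ffp, Finset.range_zero, Finset.prod_empty, mul_one, pow_zero]
      exact pp_hasSum r
  | succ j ih =>
      have h0 : pp r 0 * ffp (j+1) 0 = 0 := by
        have : ffp (j+1) 0 = 0 :=
          Finset.prod_eq_zero (Finset.mem_range.mpr (Nat.succ_pos j)) (by simp)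
        rw [this, mul_zero]
      have hshift : ∀ k, (r:ℝ) * (pp r k * ffp j k) = pp r (k+1) * ffp (j+1) (k+1) := by
        intro k
        have hprod : ffp (j+1) (k+1) = (((k:ℝ))+1) * ffp j k := by
          unfold ffp
          rw [Finset.prod_range_succ']
          have : ∀ t ∈ Finset.range j, (((k+1:ℕ)):ℝ) - ((t+1:ℕ):ℝ) = (k:ℝ) - (t:ℝ) := by
            intro t _; push_cast; ring
          rw [Finset.prod_congr rfl this]
          push_cast
          ring
        rw [hprod, ← mul_assoc, ← pp_succ_mul r k]
        ring
      have H := (ih.mul_left (r:ℝ))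
      have H2 : HasSum (fun k => pp r (k+1) * ffp (j+1) (k+1)) ((r:ℝ)^(j+1)) := by
        refine hs_trans H (fun k => (hshift k).symm) (by ring)
      have := (hasSum_nat_add_iff (f := fun k => pp r k * ffp (j+1) k) 1).mp H2
      simpa [h0] using this

lemma moment1 (r : ℝ≥0) :
    HasSum (fun k => pp r k * ((k:ℝ)+1-(r:ℝ))) 1 := by
  set μ := (r:ℝ)
  have h := hasSum_pp_ffp r
  have H := (h 1).add ((h 0).mul_left (1-μ))
  refine hs_trans H (fun k => ?_) (by ring)
  simp only [ffp, Finset.prod_range_succ, Finset.prod_range_zero]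
  push_cast; ring

lemma moment2 (r : ℝ≥0) :
    HasSum (fun k => pp r k * ((k:ℝ)+1-(r:ℝ))^2) ((r:ℝ)+1) := by
  set μ := (r:ℝ)
  have h := hasSum_pp_ffp r
  have H := ((h 2).add ((h 1).mul_left (3-2*μ))).add ((h 0).mul_left (1-2*μ+μ^2))
  refine hs_trans H (fun k => ?_) (by ring)
  simp only [ffp, Finset.prod_range_succ, Finset.prod_range_zero]
  push_cast; ring

lemma moment3 (r : ℝ≥0) :
    HasSum (fun k => pp r k * ((k:ℝ)+1-(r:ℝ))^3) (4*(r:ℝ)+1) := by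
  set μ := (r:ℝ)
  have h := hasSum_pp_ffp r
  have H := (((h 3).add ((h 2).mul_left (6-3*μ))).add ((h 1).mul_left (7-9*μ+3*μ^2))).add
    ((h 0).mul_left (1-3*μ+3*μ^2-μ^3))
  refine hs_trans H (fun k => ?_) (by ring)
  simp only [ffp, Finset.prod_range_succ, Finset.prod_range_zero]
  push_cast; ring

lemma moment4 (r : ℝ≥0) :
    HasSum (fun k => pp r k * ((k:ℝ)+1-(r:ℝ))^4) (3*(r:ℝ)^2+11*(r:ℝ)+1) := by
  set μ := (r:ℝ)
  have h := hasSum_pp_ffp r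
  have H := ((((h 4).add ((h 3).mul_left (10-4*μ))).add ((h 2).mul_left (25-24*μ+6*μ^2))).add
    ((h 1).mul_left (15-28*μ+18*μ^2-4*μ^3))).add
    ((h 0).mul_left (1-4*μ+6*μ^2-4*μ^3+μ^4))
  refine hs_trans H (fun k => ?_) (by ring)
  simp only [ffp, Finset.prod_range_succ, Finset.prod_range_zero]
  push_cast; ring

lemma moment6 (r : ℝ≥0) :
    HasSum (fun k => pp r k * ((k:ℝ)+1-(r:ℝ))^6)
      (15*(r:ℝ)^3+130*(r:ℝ)^2+57*(r:ℝ)+1) := by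
  set μ := (r:ℝ)
  have h := hasSum_pp_ffp r
  have H := ((((((h 6).add ((h 5).mul_left (21-6*μ))).add
    ((h 4).mul_left (140-90*μ+15*μ^2))).add
    ((h 3).mul_left (350-390*μ+150*μ^2-20*μ^3))).add
    ((h 2).mul_left (301-540*μ+375*μ^2-120*μ^3+15*μ^4))).add
    ((h 1).mul_left (63-186*μ+225*μ^2-140*μ^3+45*μ^4-6*μ^5))).add
    ((h 0).mul_left (1-6*μ+15*μ^2-20*μ^3+15*μ^4-6*μ^5+μ^6))
  refine hs_trans H (fun k => ?_) (by ring)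
  simp only [ffp, Finset.prod_range_succ, Finset.prod_range_zero]
  push_cast; ring

lemma summable_pp_log (r : ℝ≥0) : Summable (fun k => pp r k * Real.log ((k:ℝ)+1)) := by
  have hmaj : Summable (fun k => pp r k * (k:ℝ) + pp r k) := by
    have h1 : HasSum (fun k => pp r k * (k:ℝ)) ((r:ℝ)) := by
      refine hs_trans (hasSum_pp_ffp r 1) (fun k => ?_) (by ring)
      simp only [ffp, Finset.prod_range_succ, Finset.prod_range_zero]
      ring
    exact (h1.add (pp_hasSum r)).summable
  refine Summable.of_nonneg_of_le (fun k => ?_) (fun k => ?_) hmaj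
  · exact mul_nonneg (pp_nonneg _ _) (Real.log_nonneg (by push_cast; linarith [Nat.cast_nonneg (α := ℝ) k]))
  · have hlog : Real.log ((k:ℝ)+1) ≤ (k:ℝ) := by
      have := Real.log_le_sub_one_of_pos (x := (k:ℝ)+1) (by positivity)
      linarith
    calc pp r k * Real.log ((k:ℝ)+1) ≤ pp r k * ((k:ℝ)+1) :=
          mul_le_mul_of_nonneg_left (by linarith) (pp_nonneg _ _)
      _ = pp r k * (k:ℝ) + pp r k := by ring

lemma hasSum_pp_xlog (r : ℝ≥0) :
    HasSum (fun k => pp r k * xlog (k:ℝ))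
      ((r:ℝ) * ∑' k, pp r k * Real.log ((k:ℝ)+1)) := by
  have hL := (summable_pp_log r).hasSum
  have H := hL.mul_left (r:ℝ)
  have H2 : HasSum (fun k => pp r (k+1) * xlog ((k+1:ℕ):ℝ))
      ((r:ℝ) * ∑' k, pp r k * Real.log ((k:ℝ)+1)) := by
    refine hs_trans H (fun k => ?_) rfl
    unfold xlog
    push_cast
    rw [← mul_assoc, pp_succ_mul r k]
    ring
  have := (hasSum_nat_add_iff (f := fun k => pp r k * xlog (k:ℝ)) 1).mp H2
  simpa [xlog] using this

lemma Rbound_aux (lm x : ℝ) (hlm : 0 ≤ lm) (hx : 0 < 1 + x)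
    (hup : Real.log (1+x) ≤ x) (hlow : -lm ≤ Real.log (1+x)) :
    |Real.log (1+x) - (x - x^2/2 + x^3/3)| ≤ 19*x^4 + (64*lm)*x^6 := by
  have hx4 : (0:ℝ) ≤ x^4 := by positivity
  have hx6 : (0:ℝ) ≤ x^6 := by positivity
  by_cases hc : |x| ≤ 1/2
  · have habs : |(-x)| < 1 := by rw [abs_neg]; linarith [abs_nonneg x]
    have key := Real.abs_log_sub_add_sum_range_le habs 3
    have hsum3 : (∑ i ∈ Finset.range 3, (-x)^(i+1)/((i:ℝ)+1))
        = -x + x^2/2 - x^3/3 := by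
      simp [Finset.sum_range_succ]
      ring
    rw [hsum3, sub_neg_eq_add] at key
    have hRe : |Real.log (1+x) - (x - x^2/2 + x^3/3)|
        = |(-x + x^2/2 - x^3/3) + Real.log (1 + x)| := by
      congr 1; ring
    rw [hRe]
    refine key.trans ?_
    rw [abs_neg]
    have hpos : 0 < 1 - |x| := by linarith
    have habs4' : |x|^(3+1) = x^4 := by rw [← abs_pow, abs_of_nonneg hx4]
    rw [habs4', div_le_iff₀ hpos]
    nlinarith [mul_nonneg hx4 (by linarith : (0:ℝ) ≤ 1/2 - |x|),
      mul_nonneg (mul_nonneg hlm hx6) (by linarith : (0:ℝ) ≤ 1 - |x|)]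
  · push_neg at hc
    have habs3 : |x^3| = |x|^3 := abs_pow _ _
    have habs4 : x^4 = |x|^4 := by rw [← abs_pow, abs_of_nonneg hx4]
    have habs6 : x^6 = |x|^6 := by rw [← abs_pow, abs_of_nonneg hx6]
    have htle : x ≤ |x| := le_abs_self _
    have htge : -|x| ≤ x := neg_abs_le _
    have ht3le : x^3 ≤ |x|^3 := habs3 ▸ le_abs_self _
    have ht3ge : -(|x|^3) ≤ x^3 := by
      have := neg_abs_le (x^3); rw [habs3] at this; exact this
    have hB : |Real.log (1+x) - (x - x^2/2 + x^3/3)| ≤ lm + |x| + x^2/2 + |x|^3/3 := by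
      rw [abs_le]
      constructor
      · linarith [sq_nonneg x]
      · linarith [abs_nonneg x]
    have hta2 : 1/4 ≤ |x|^2 := by nlinarith [hc]
    have hta3 : 1/8 ≤ |x|^3 := by nlinarith [hc, hta2, abs_nonneg x]
    have hta6 : 1/64 ≤ |x|^6 := by nlinarith [hta3]
    have e1 : |x| ≤ 8 * x^4 := by
      rw [habs4]; nlinarith [hta3, abs_nonneg x]
    have e2 : x^2/2 ≤ 2 * x^4 := by
      rw [habs4, ← sq_abs x]; nlinarith [hta2, sq_nonneg |x|]
    have e3 : |x|^3/3 ≤ x^4 := by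
      rw [habs4]; nlinarith [hc, pow_nonneg (abs_nonneg x) 3]
    have e4 : lm ≤ 64 * lm * x^6 := by
      rw [habs6]; nlinarith [hta6, hlm]
    linarith

lemma poisson_xlog_est (r : ℝ≥0) (hr : 2 ≤ (r:ℝ)) :
    |(∑' k, pp r k * xlog (k:ℝ)) - ((r:ℝ) * Real.log (r:ℝ) + 1/2)| ≤ 20000 / (r:ℝ) := by
  set μ := (r:ℝ) with hμdef
  have hμ1 : (1:ℝ) ≤ μ := by linarith
  have hμ0 : (0:ℝ) < μ := by linarith
  have hlogμ0 : 0 ≤ Real.log μ := Real.log_nonneg hμ1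
  have hlogμ : Real.log μ ≤ μ := (Real.log_le_sub_one_of_pos hμ0).trans (by linarith)
  set L := ∑' k, pp r k * Real.log ((k:ℝ)+1) with hLdef
  have hF : (∑' k, pp r k * xlog (k:ℝ)) = μ * L := (hasSum_pp_xlog r).tsum_eq
  set t : ℕ → ℝ := fun k => ((k:ℝ)+1-μ)/μ with htdef
  have hm1 : HasSum (fun k => pp r k * t k) (1/μ) := by
    refine hs_trans ((moment1 r).mul_left (1/μ)) (fun k => ?_) (by ring)
    simp only [htdef]; ring
  have hm2 : HasSum (fun k => pp r k * (t k)^2) ((μ+1)/μ^2) := by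
    refine hs_trans ((moment2 r).mul_left (1/μ^2)) (fun k => ?_) (by ring)
    simp only [htdef]; field_simp; rfl
  have hm3 : HasSum (fun k => pp r k * (t k)^3) ((4*μ+1)/μ^3) := by
    refine hs_trans ((moment3 r).mul_left (1/μ^3)) (fun k => ?_) (by ring)
    simp only [htdef]; field_simp; rfl
  have hm4 : HasSum (fun k => pp r k * (t k)^4) ((3*μ^2+11*μ+1)/μ^4) := by
    refine hs_trans ((moment4 r).mul_left (1/μ^4)) (fun k => ?_) (by ring)
    simp only [htdef]; field_simp; rfl
  have hm6 : HasSum (fun k => pp r k * (t k)^6) ((15*μ^3+130*μ^2+57*μ+1)/μ^6) := by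
    refine hs_trans ((moment6 r).mul_left (1/μ^6)) (fun k => ?_) (by ring)
    simp only [htdef]; field_simp; rfl
  have h1t : ∀ k, 0 < 1 + t k := by
    intro k
    have e : 1 + t k = ((k:ℝ)+1)/μ := by simp only [htdef]; field_simp; ring
    rw [e]; positivity
  have hlog1 : ∀ k, Real.log (1 + t k) = Real.log ((k:ℝ)+1) - Real.log μ := by
    intro k
    have e : 1 + t k = ((k:ℝ)+1)/μ := by simp only [htdef]; field_simp; ring
    rw [e, Real.log_div (by positivity) (ne_of_gt hμ0)]
  have hlogconst : HasSum (fun k => pp r k * Real.log μ) (Real.log μ) := by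
    refine hs_trans ((pp_hasSum r).mul_left (Real.log μ)) (fun k => by ring) (by ring)
  have hsumlog1t : HasSum (fun k => pp r k * Real.log (1 + t k)) (L - Real.log μ) := by
    refine hs_trans ((summable_pp_log r).hasSum.sub hlogconst) (fun k => ?_) rfl
    rw [hlog1 k]; ring
  set P : ℝ := 1/μ - ((μ+1)/μ^2)/2 + ((4*μ+1)/μ^3)/3 with hPdef
  have hsum_poly : HasSum (fun k => pp r k * (t k - (t k)^2/2 + (t k)^3/3)) P := by
    refine hs_trans ((hm1.sub (hm2.div_const 2)).add (hm3.div_const 3)) (fun k => ?_) (by rw [hPdef])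
    ring
  set R : ℕ → ℝ := fun k => Real.log (1 + t k) - (t k - (t k)^2/2 + (t k)^3/3) with hRdef
  have hsumR : HasSum (fun k => pp r k * R k) ((L - Real.log μ) - P) := by
    refine hs_trans (hsumlog1t.sub hsum_poly) (fun k => ?_) rfl
    simp only [hRdef]; ring
  -- pointwise bound
  have hRbound : ∀ k, |R k| ≤ 19 * (t k)^4 + (64 * Real.log μ) * (t k)^6 := by
    intro k
    have hup : Real.log (1 + t k) ≤ t k := by
      have := Real.log_le_sub_one_of_pos (h1t k)
      linarith
    have hlow : -Real.log μ ≤ Real.log (1 + t k) := by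
      rw [hlog1 k]
      have : 0 ≤ Real.log ((k:ℝ)+1) := Real.log_nonneg (by linarith [Nat.cast_nonneg (α := ℝ) k])
      linarith
    exact Rbound_aux (Real.log μ) (t k) hlogμ0 (h1t k) hup hlow
  -- bound the R-sum
  have hmaj : HasSum (fun k => 19 * (pp r k * (t k)^4) + (64 * Real.log μ) * (pp r k * (t k)^6))
      (19 * ((3*μ^2+11*μ+1)/μ^4) + (64 * Real.log μ) * ((15*μ^3+130*μ^2+57*μ+1)/μ^6)) :=
    (hm4.mul_left 19).add (hm6.mul_left (64 * Real.log μ))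
  have hptw : ∀ k, |pp r k * R k| ≤
      19 * (pp r k * (t k)^4) + (64 * Real.log μ) * (pp r k * (t k)^6) := by
    intro k
    rw [abs_mul, abs_of_nonneg (pp_nonneg r k)]
    calc pp r k * |R k| ≤ pp r k * (19 * (t k)^4 + (64 * Real.log μ) * (t k)^6) :=
          mul_le_mul_of_nonneg_left (hRbound k) (pp_nonneg r k)
      _ = 19 * (pp r k * (t k)^4) + (64 * Real.log μ) * (pp r k * (t k)^6) := by ring
  have habs_sum : Summable (fun k => |pp r k * R k|) :=
    Summable.of_nonneg_of_le (fun k => abs_nonneg _) hptw hmaj.summable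
  have hSabs : |∑' k, pp r k * R k|
      ≤ 19 * ((3*μ^2+11*μ+1)/μ^4) + (64 * Real.log μ) * ((15*μ^3+130*μ^2+57*μ+1)/μ^6) := by
    calc |∑' k, pp r k * R k| ≤ ∑' k, |pp r k * R k| := by
          have h2 := norm_tsum_le_tsum_norm (f := fun k => pp r k * R k)
            (by simpa only [Real.norm_eq_abs] using habs_sum)
          simpa only [Real.norm_eq_abs] using h2
      _ ≤ ∑' k, (19 * (pp r k * (t k)^4) + (64 * Real.log μ) * (pp r k * (t k)^6)) :=
          Summable.tsum_le_tsum hptw habs_sum hmaj.summable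
      _ = _ := hmaj.tsum_eq
  -- final assembly
  set S := ∑' k, pp r k * R k with hSdef
  have hS : S = (L - Real.log μ) - P := hsumR.tsum_eq
  have hLL : L = Real.log μ + P + S := by linarith
  rw [hF, hLL]
  have expand : μ * (Real.log μ + P + S) - (μ * Real.log μ + 1/2)
      = (-(1/(2*μ)) + (4*μ+1)/(3*μ^2)) + μ * S := by
    rw [hPdef]
    field_simp
    ring
  rw [expand]
  have h1 : |(-(1/(2*μ)) + (4*μ+1)/(3*μ^2))| ≤ 3/μ := by
    rw [abs_le]
    have epos : 0 < (4*μ+1)/(3*μ^2) := by positivity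
    have e0 : 1/(2*μ) ≤ 3/μ := by
      rw [div_le_div_iff₀ (by positivity) hμ0]
      nlinarith
    have e1 : 0 < 1/(2*μ) := by positivity
    have e2 : (4*μ+1)/(3*μ^2) ≤ 3/μ := by
      rw [div_le_div_iff₀ (by positivity) hμ0]
      nlinarith
    constructor
    · linarith
    · linarith
  have h3 : 19 * ((3*μ^2+11*μ+1)/μ^4) + (64 * Real.log μ) * ((15*μ^3+130*μ^2+57*μ+1)/μ^6)
      ≤ 19997/μ^2 := by
    rw [← sub_nonneg]
    have e : 19997/μ^2 - (19 * ((3*μ^2+11*μ+1)/μ^4) + (64 * Real.log μ) * ((15*μ^3+130*μ^2+57*μ+1)/μ^6))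
        = (19997*μ^4 - 19*(3*μ^2+11*μ+1)*μ^2 - 64*Real.log μ*(15*μ^3+130*μ^2+57*μ+1))/μ^6 := by
      field_simp
      ring
    rw [e]
    apply div_nonneg _ (by positivity)
    have hb1 : 64*Real.log μ*(15*μ^3+130*μ^2+57*μ+1) ≤ 64*μ*(15*μ^3+130*μ^2+57*μ+1) := by
      apply mul_le_mul_of_nonneg_right (by linarith) (by positivity)
    have hp1 : μ ≤ μ^4 := le_self_pow₀ hμ1 (by norm_num)
    have hp2 : μ^2 ≤ μ^4 := pow_le_pow_right₀ hμ1 (by norm_num)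
    have hp3 : μ^3 ≤ μ^4 := pow_le_pow_right₀ hμ1 (by norm_num)
    nlinarith [hb1, hp1, hp2, hp3]
  have h2 : |μ * S| ≤ 19997/μ := by
    rw [abs_mul, abs_of_pos hμ0]
    calc μ * |S| ≤ μ * (19997/μ^2) := by
          apply mul_le_mul_of_nonneg_left (hSabs.trans h3) (le_of_lt hμ0)
      _ = 19997/μ := by field_simp
  calc |(-(1/(2*μ)) + (4*μ+1)/(3*μ^2)) + μ * S|
      ≤ |(-(1/(2*μ)) + (4*μ+1)/(3*μ^2))| + |μ * S| := abs_add_le _ _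
    _ ≤ 3/μ + 19997/μ := add_le_add h1 h2
    _ = 20000/μ := by ring

noncomputable def Fp (r : ℝ≥0) : ℝ := ∑' k, pp r k * xlog (k:ℝ)

lemma summable_pp_xlog_abs (r : ℝ≥0) : Summable fun k => pp r k * |xlog (k:ℝ)| := by
  have hmaj : Summable (fun k : ℕ => pp r k * ((k:ℝ)^2)) := by
    have H := (hasSum_pp_ffp r 2).add (hasSum_pp_ffp r 1)
    apply Summable.congr H.summable
    intro k
    simp only [ffp, Finset.prod_range_succ, Finset.prod_range_zero]
    push_cast
    ring
  refine Summable.of_nonneg_of_le (fun k => ?_) (fun k => ?_) hmaj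
  · exact mul_nonneg (pp_nonneg _ _) (abs_nonneg _)
  · have h1 : |xlog (k:ℝ)| ≤ (k:ℝ)^2 := by
      unfold xlog
      rcases Nat.eq_zero_or_pos k with hk | hk
      · subst hk; simp
      · have hk1 : (1:ℝ) ≤ (k:ℝ) := by exact_mod_cast hk
        have hlog0 : 0 ≤ Real.log (k:ℝ) := Real.log_nonneg hk1
        have hlogk : Real.log (k:ℝ) ≤ (k:ℝ) := by
          have := Real.log_le_sub_one_of_pos (by linarith : (0:ℝ) < (k:ℝ))
          linarith
        rw [abs_of_nonneg (mul_nonneg (by linarith) hlog0)]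
        calc (k:ℝ) * Real.log (k:ℝ) ≤ (k:ℝ) * (k:ℝ) :=
              mul_le_mul_of_nonneg_left hlogk (by linarith)
          _ = (k:ℝ)^2 := by ring
    exact mul_le_mul_of_nonneg_left h1 (pp_nonneg _ _)

lemma integrable_poisson_of_summable {r : ℝ≥0} {f : ℕ → ℝ}
    (h : Summable fun k => pp r k * |f k|) : Integrable f (poissonMeasure r) := by
  refine ⟨Measurable.aestronglyMeasurable (by exact measurable_from_top), ?_⟩
  show ∫⁻ k, ‖f k‖₊ ∂(poissonMeasure r) < ⊤
  rw [lintegral_countable']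
  have e : ∀ k : ℕ, (‖f k‖₊ : ℝ≥0∞) * poissonMeasure r {k} = ENNReal.ofReal (pp r k * |f k|) := by
    intro k
    rw [poisson_singleton, ← enorm_eq_nnnorm, Real.enorm_eq_ofReal_abs, ← ENNReal.ofReal_mul (abs_nonneg _)]
    rw [mul_comm]
  rw [tsum_congr e, ← ENNReal.ofReal_tsum_of_nonneg
    (fun k => mul_nonneg (pp_nonneg r k) (abs_nonneg _)) h]
  exact ENNReal.ofReal_lt_top

lemma integral_poisson_eq_tsum {r : ℝ≥0} {f : ℕ → ℝ}
    (h : Summable fun k => pp r k * |f k|) :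
    ∫ k, f k ∂(poissonMeasure r) = ∑' k, pp r k * f k := by
  rw [integral_poissonMeasure' (integrable_poisson_of_summable h)]
  apply tsum_congr
  intro k
  rw [smul_eq_mul]
  rfl

lemma integrable_xlog_poisson {Ω : Type*} [MeasurableSpace Ω] {μ : Measure Ω}
    {S : Ω → ℕ} (hS : Measurable S) {R : ℝ≥0} (hlaw : μ.map S = poissonMeasure R) :
    Integrable (fun ω => xlog (S ω : ℝ)) μ := by
  have hint : Integrable (fun k : ℕ => xlog (k:ℝ)) (poissonMeasure R) :=
    integrable_poisson_of_summable (summable_pp_xlog_abs R)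
  rw [← hlaw] at hint
  exact (integrable_map_measure (Measurable.aestronglyMeasurable
    (by exact measurable_from_top)) hS.aemeasurable).mp hint

lemma integral_xlog_poisson {Ω : Type*} [MeasurableSpace Ω] {μ : Measure Ω}
    {S : Ω → ℕ} (hS : Measurable S) {R : ℝ≥0} (hlaw : μ.map S = poissonMeasure R) :
    ∫ ω, xlog (S ω : ℝ) ∂μ = Fp R := by
  have e : ∫ ω, xlog (S ω : ℝ) ∂μ = ∫ k, xlog (k:ℝ) ∂(μ.map S) := by
    rw [integral_map hS.aemeasurable (Measurable.aestronglyMeasurable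
      (by exact measurable_from_top))]
  rw [e, hlaw, integral_poisson_eq_tsum (summable_pp_xlog_abs R)]
  rfl

lemma iIndepFun_congr_ae {ι Ω : Type*} [MeasurableSpace Ω] {μ : Measure Ω}
    {f f' : ι → Ω → ℕ} (h : iIndepFun f μ)
    (hff' : ∀ i, f i =ᵐ[μ] f' i) : iIndepFun f' μ := by
  rw [iIndepFun_iff_measure_inter_preimage_eq_mul] at h ⊢
  intro S sets hsets
  have hae : ∀ᵐ ω ∂μ, ∀ i ∈ S, f i ω = f' i ω :=
    (ae_ball_iff S.countable_toSet).mpr fun i _ => hff' i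
  have h1 : ((⋂ i ∈ S, (f' i) ⁻¹' (sets i)) : Set Ω) =ᵐ[μ] (⋂ i ∈ S, (f i) ⁻¹' (sets i)) := by
    filter_upwards [hae] with ω hω
    show (ω ∈ ⋂ i ∈ S, (f' i) ⁻¹' (sets i)) = (ω ∈ ⋂ i ∈ S, (f i) ⁻¹' (sets i))
    apply eq_iff_iff.mpr
    constructor
    · intro hx
      rw [Set.mem_iInter₂] at hx ⊢
      intro i hi
      show f i ω ∈ sets i
      rw [hω i hi]
      exact hx i hi
    · intro hx
      rw [Set.mem_iInter₂] at hx ⊢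
      intro i hi
      show f' i ω ∈ sets i
      rw [← hω i hi]
      exact hx i hi
  rw [measure_congr h1, h S hsets]
  apply Finset.prod_congr rfl
  intro i hi
  apply measure_congr
  filter_upwards [hff' i] with ω hω
  show (ω ∈ (f i) ⁻¹' (sets i)) = (ω ∈ (f' i) ⁻¹' (sets i))
  apply eq_iff_iff.mpr
  show f i ω ∈ sets i ↔ f' i ω ∈ sets i
  rw [hω]

lemma alg_cancel {N G : Type*} [Fintype N] [Fintype G] [DecidableEq G] [Nonempty G]
    (g : N → G) (θ : N → ℝ) (w : G → G → ℝ)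
    (hθ : ∀ i, 0 < θ i) (hw : ∀ r s, 0 < w r s)
    (hcons : ∀ r, ∑ i ∈ Finset.univ.filter (fun i => g i = r), θ i = 1) :
    (∑ i, ∑ s, xlog (θ i * w (g i) s)) - (∑ i, xlog (θ i * ∑ s, w (g i) s))
      - (∑ r, ∑ s, xlog (w r s)) + (∑ r, xlog (∑ s, w r s)) = 0 := by
  have hW : ∀ r, 0 < ∑ s, w r s := fun r => Finset.sum_pos (fun s _ => hw r s) Finset.univ_nonempty
  set c : G → ℝ := fun r => (∑ s, xlog (w r s)) - xlog (∑ s, w r s) with hc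
  have key : ∀ i, (∑ s, xlog (θ i * w (g i) s)) - xlog (θ i * ∑ s, w (g i) s)
      = θ i * c (g i) := by
    intro i
    have h1 : ∀ s : G, xlog (θ i * w (g i) s)
        = θ i * w (g i) s * Real.log (θ i) + θ i * xlog (w (g i) s) := by
      intro s; unfold xlog
      rw [Real.log_mul (hθ i).ne' (hw _ s).ne']
      ring
    have h2 : xlog (θ i * ∑ s, w (g i) s)
        = θ i * (∑ s, w (g i) s) * Real.log (θ i) + θ i * xlog (∑ s, w (g i) s) := by
      unfold xlog
      rw [Real.log_mul (hθ i).ne' (hW _).ne']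
      ring
    rw [Finset.sum_congr rfl (fun s _ => h1 s), h2, Finset.sum_add_distrib,
      ← Finset.sum_mul, ← Finset.mul_sum, ← Finset.mul_sum]
    simp only [hc]
    ring
  have step1 : (∑ i, ∑ s, xlog (θ i * w (g i) s)) - (∑ i, xlog (θ i * ∑ s, w (g i) s))
      = ∑ i, θ i * c (g i) := by
    rw [← Finset.sum_sub_distrib]
    exact Finset.sum_congr rfl (fun i _ => key i)
  have step2 : ∑ i, θ i * c (g i) = ∑ r, c r := by
    rw [← Finset.sum_fiberwise Finset.univ g (fun i => θ i * c (g i))]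
    apply Finset.sum_congr rfl
    intro r _
    have e : ∀ i ∈ Finset.univ.filter (fun i => g i = r), θ i * c (g i) = θ i * c r := by
      intro i hi
      rw [(Finset.mem_filter.mp hi).2]
    rw [Finset.sum_congr rfl e, ← Finset.sum_mul, hcons r, one_mul]
  have step3 : (∑ r, c r) - (∑ r, ∑ s, xlog (w r s)) + (∑ r, xlog (∑ s, w r s)) = 0 := by
    simp only [hc, Finset.sum_sub_distrib]
    ring
  have := step1
  linarith [step1, step2, step3]

end PoissonAux


section KeyStep
open ProbabilityTheory
set_option maxHeartbeats 2000000

private lemma sum_decomp {α : Type*} [Fintype α] (f u v : α → ℝ) (c : ℝ)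
    (h : ∀ a, f a = u a + c + v a) :
    ∑ a, f a = (∑ a, u a) + ((Fintype.card α : ℝ) * c + ∑ a, v a) := by
  rw [Finset.sum_congr rfl (fun a _ => h a), Finset.sum_add_distrib, Finset.sum_add_distrib,
    Finset.sum_const, nsmul_eq_mul, Finset.card_univ]
  ring

lemma key_step {Ω : Type*} [MeasureSpace Ω] [IsProbabilityMeasure (ℙ : Measure Ω)]
    {G : Type*} [Fintype G] [DecidableEq G] [Nonempty G]
    {n : ℕ} (g : Fin n → G) (θo θi : Fin n → ℝ≥0) (ω : G → G → ℝ≥0)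
    (hθo : ∀ i, 0 < θo i) (hθi : ∀ i, 0 < θi i) (hω : ∀ r s, 0 < ω r s)
    (hconso : ∀ r : G, ∑ i ∈ Finset.univ.filter (fun i => g i = r), θo i = 1)
    (hconsi : ∀ r : G, ∑ i ∈ Finset.univ.filter (fun i => g i = r), θi i = 1)
    (X : Fin n × Fin n → Ω → ℕ) (hX : ∀ p, Measurable (X p))
    (hind : iIndepFun X ℙ)
    (hlaw : ∀ p, (ℙ : Measure Ω).map (X p)
      = poissonMeasure (θo p.1 * θi p.2 * ω (g p.1) (g p.2)))
    {m0 : ℝ} (hm0 : 2 ≤ m0)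
    (hmino : ∀ i s, m0 ≤ ((θo i * ω (g i) s : ℝ≥0) : ℝ))
    (hmini : ∀ i s, m0 ≤ ((θi i * ω s (g i) : ℝ≥0) : ℝ)) :
    |(∫ x, llrStat g (fun i j => X (i, j) x) ∂ℙ)
        - ((Fintype.card G : ℝ) - 1) * ((n : ℝ) - (Fintype.card G : ℝ))|
      ≤ (2*(n:ℝ)*(Fintype.card G : ℝ) + 2*(n:ℝ) + 2*(Fintype.card G : ℝ)^2
          + 2*(Fintype.card G : ℝ)) * (20000 / m0) := by
  classical
  set K' : ℝ := (Fintype.card G : ℝ) with hK'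
  set N' : ℝ := (n : ℝ) with hN'
  set fib : G → Finset (Fin n) := fun s => Finset.univ.filter (fun j => g j = s) with hfib
  set lam : Fin n × Fin n → ℝ≥0 :=
    fun p => θo p.1 * θi p.2 * ω (g p.1) (g p.2) with hlam
  set Wo : G → ℝ≥0 := fun r => ∑ s, ω r s with hWo
  set Wi : G → ℝ≥0 := fun r => ∑ s, ω s r with hWi
  -- rate partial sums
  have hinner : ∀ (i : Fin n) (s : G), ∑ j ∈ fib s, lam (i, j) = θo i * ω (g i) s := by
    intro i s
    have e : ∀ j ∈ fib s, lam (i, j) = (θo i * ω (g i) s) * θi j := by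
      intro j hj
      have hgj : g j = s := (Finset.mem_filter.mp hj).2
      simp only [hlam, hgj]; ring
    rw [Finset.sum_congr rfl e, ← Finset.mul_sum]
    rw [show (∑ j ∈ fib s, θi j) = 1 from hconsi s, mul_one]
  have hinner' : ∀ (j : Fin n) (r : G), ∑ i ∈ fib r, lam (i, j) = θi j * ω r (g j) := by
    intro j r
    have e : ∀ i ∈ fib r, lam (i, j) = (θi j * ω r (g j)) * θo i := by
      intro i hi
      have hgi : g i = r := (Finset.mem_filter.mp hi).2
      simp only [hlam, hgi]; ring
    rw [Finset.sum_congr rfl e, ← Finset.mul_sum]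
    rw [show (∑ i ∈ fib r, θo i) = 1 from hconso r, mul_one]
  have hrow : ∀ i : Fin n, ∑ j, lam (i, j) = θo i * Wo (g i) := by
    intro i
    rw [← Finset.sum_fiberwise Finset.univ g (fun j => lam (i, j))]
    rw [show Wo (g i) = ∑ s, ω (g i) s from rfl, Finset.mul_sum]
    exact Finset.sum_congr rfl (fun s _ => hinner i s)
  have hcol : ∀ j : Fin n, ∑ i, lam (i, j) = θi j * Wi (g j) := by
    intro j
    rw [← Finset.sum_fiberwise Finset.univ g (fun i => lam (i, j))]
    rw [show Wi (g j) = ∑ s, ω s (g j) from rfl, Finset.mul_sum]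
    exact Finset.sum_congr rfl (fun r _ => hinner' j r)
  -- master lemma
  have main : ∀ (T : Finset (Fin n × Fin n)) (R : ℝ≥0), (∑ p ∈ T, lam p) = R →
      Integrable (fun x => xlog ((∑ p ∈ T, X p x : ℕ) : ℝ)) ℙ ∧
        ∫ x, xlog ((∑ p ∈ T, X p x : ℕ) : ℝ) ∂ℙ = Fp R := by
    intro T R hR
    have hlawT := map_sum_poisson hX hind lam T (fun p _ => hlaw p)
    rw [hR] at hlawT
    have hmeas : Measurable fun x => ∑ p ∈ T, X p x :=
      Finset.measurable_sum _ (fun p _ => hX p)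
    exact ⟨integrable_xlog_poisson hmeas hlawT, integral_xlog_poisson hmeas hlawT⟩
  -- degree families
  have HdOut : ∀ (i : Fin n) (s : G),
      Integrable (fun x => xlog ((dOut g (fun a b => X (a, b) x) i s : ℕ) : ℝ)) ℙ ∧
        ∫ x, xlog ((dOut g (fun a b => X (a, b) x) i s : ℕ) : ℝ) ∂ℙ
          = Fp (θo i * ω (g i) s) := by
    intro i s
    have hfun : ∀ x : Ω, (dOut g (fun a b => X (a, b) x) i s : ℕ)
        = ∑ p ∈ ({i} ×ˢ fib s), X p x := by
      intro x
      rw [Finset.sum_product, Finset.sum_singleton]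
      rfl
    have hrate : ∑ p ∈ ({i} ×ˢ fib s), lam p = θo i * ω (g i) s := by
      rw [Finset.sum_product, Finset.sum_singleton, hinner i s]
    rw [show (fun x => xlog ((dOut g (fun a b => X (a, b) x) i s : ℕ) : ℝ))
        = (fun x => xlog ((∑ p ∈ ({i} ×ˢ fib s), X p x : ℕ) : ℝ))
      from funext fun x => by rw [hfun x]]
    exact main _ _ hrate
  have HdIn : ∀ (i : Fin n) (s : G),
      Integrable (fun x => xlog ((dIn g (fun a b => X (a, b) x) i s : ℕ) : ℝ)) ℙ ∧
        ∫ x, xlog ((dIn g (fun a b => X (a, b) x) i s : ℕ) : ℝ) ∂ℙ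
          = Fp (θi i * ω s (g i)) := by
    intro i s
    have hfun : ∀ x : Ω, (dIn g (fun a b => X (a, b) x) i s : ℕ)
        = ∑ p ∈ (fib s ×ˢ {i}), X p x := by
      intro x
      rw [Finset.sum_product]
      simp only [Finset.sum_singleton]
      rfl
    have hrate : ∑ p ∈ (fib s ×ˢ {i}), lam p = θi i * ω s (g i) := by
      rw [Finset.sum_product]
      simp only [Finset.sum_singleton]
      rw [hinner' i s]
    rw [show (fun x => xlog ((dIn g (fun a b => X (a, b) x) i s : ℕ) : ℝ))
        = (fun x => xlog ((∑ p ∈ (fib s ×ˢ {i}), X p x : ℕ) : ℝ))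
      from funext fun x => by rw [hfun x]]
    exact main _ _ hrate
  have HtotOut : ∀ i : Fin n,
      Integrable (fun x => xlog ((dTotOut (fun a b => X (a, b) x) i : ℕ) : ℝ)) ℙ ∧
        ∫ x, xlog ((dTotOut (fun a b => X (a, b) x) i : ℕ) : ℝ) ∂ℙ
          = Fp (θo i * Wo (g i)) := by
    intro i
    have hfun : ∀ x : Ω, (dTotOut (fun a b => X (a, b) x) i : ℕ)
        = ∑ p ∈ (({i} : Finset (Fin n)) ×ˢ Finset.univ), X p x := by
      intro x
      rw [Finset.sum_product, Finset.sum_singleton]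
      rfl
    have hrate : ∑ p ∈ (({i} : Finset (Fin n)) ×ˢ Finset.univ), lam p = θo i * Wo (g i) := by
      rw [Finset.sum_product, Finset.sum_singleton, hrow i]
    rw [show (fun x => xlog ((dTotOut (fun a b => X (a, b) x) i : ℕ) : ℝ))
        = (fun x => xlog ((∑ p ∈ (({i} : Finset (Fin n)) ×ˢ Finset.univ), X p x : ℕ) : ℝ))
      from funext fun x => by rw [hfun x]]
    exact main _ _ hrate
  have HtotIn : ∀ i : Fin n,
      Integrable (fun x => xlog ((dTotIn (fun a b => X (a, b) x) i : ℕ) : ℝ)) ℙ ∧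
        ∫ x, xlog ((dTotIn (fun a b => X (a, b) x) i : ℕ) : ℝ) ∂ℙ
          = Fp (θi i * Wi (g i)) := by
    intro i
    have hfun : ∀ x : Ω, (dTotIn (fun a b => X (a, b) x) i : ℕ)
        = ∑ p ∈ ((Finset.univ : Finset (Fin n)) ×ˢ {i}), X p x := by
      intro x
      rw [Finset.sum_product]
      simp only [Finset.sum_singleton]
      rfl
    have hrate : ∑ p ∈ ((Finset.univ : Finset (Fin n)) ×ˢ {i}), lam p = θi i * Wi (g i) := by
      rw [Finset.sum_product]
      simp only [Finset.sum_singleton]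
      rw [hcol i]
    rw [show (fun x => xlog ((dTotIn (fun a b => X (a, b) x) i : ℕ) : ℝ))
        = (fun x => xlog ((∑ p ∈ ((Finset.univ : Finset (Fin n)) ×ˢ {i}), X p x : ℕ) : ℝ))
      from funext fun x => by rw [hfun x]]
    exact main _ _ hrate
  have Hm : ∀ (r s : G),
      Integrable (fun x => xlog ((mEdges g (fun a b => X (a, b) x) r s : ℕ) : ℝ)) ℙ ∧
        ∫ x, xlog ((mEdges g (fun a b => X (a, b) x) r s : ℕ) : ℝ) ∂ℙ = Fp (ω r s) := by
    intro r s
    have hfun : ∀ x : Ω, (mEdges g (fun a b => X (a, b) x) r s : ℕ)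
        = ∑ p ∈ (fib r ×ˢ fib s), X p x := by
      intro x
      rw [Finset.sum_product]
      rfl
    have hrate : ∑ p ∈ (fib r ×ˢ fib s), lam p = ω r s := by
      rw [Finset.sum_product]
      have e : ∀ i ∈ fib r, (∑ j ∈ fib s, lam (i, j)) = (ω r s) * θo i := by
        intro i hi
        have hgi : g i = r := (Finset.mem_filter.mp hi).2
        rw [hinner i s, hgi]
        ring
      rw [Finset.sum_congr rfl e, ← Finset.mul_sum]
      rw [show (∑ i ∈ fib r, θo i) = 1 from hconso r, mul_one]
    rw [show (fun x => xlog ((mEdges g (fun a b => X (a, b) x) r s : ℕ) : ℝ))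
        = (fun x => xlog ((∑ p ∈ (fib r ×ˢ fib s), X p x : ℕ) : ℝ))
      from funext fun x => by rw [hfun x]]
    exact main _ _ hrate
  have HgOut : ∀ r : G,
      Integrable (fun x => xlog ((dGrpOut g (fun a b => X (a, b) x) r : ℕ) : ℝ)) ℙ ∧
        ∫ x, xlog ((dGrpOut g (fun a b => X (a, b) x) r : ℕ) : ℝ) ∂ℙ = Fp (Wo r) := by
    intro r
    have hfun : ∀ x : Ω, (dGrpOut g (fun a b => X (a, b) x) r : ℕ)
        = ∑ p ∈ (fib r ×ˢ Finset.univ), X p x := by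
      intro x
      rw [Finset.sum_product]
      rfl
    have hrate : ∑ p ∈ (fib r ×ˢ Finset.univ), lam p = Wo r := by
      rw [Finset.sum_product]
      have e : ∀ i ∈ fib r, (∑ j, lam (i, j)) = (Wo r) * θo i := by
        intro i hi
        have hgi : g i = r := (Finset.mem_filter.mp hi).2
        rw [hrow i, hgi]
        ring
      rw [Finset.sum_congr rfl e, ← Finset.mul_sum]
      rw [show (∑ i ∈ fib r, θo i) = 1 from hconso r, mul_one]
    rw [show (fun x => xlog ((dGrpOut g (fun a b => X (a, b) x) r : ℕ) : ℝ))
        = (fun x => xlog ((∑ p ∈ (fib r ×ˢ Finset.univ), X p x : ℕ) : ℝ))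
      from funext fun x => by rw [hfun x]]
    exact main _ _ hrate
  have HgIn : ∀ r : G,
      Integrable (fun x => xlog ((dGrpIn g (fun a b => X (a, b) x) r : ℕ) : ℝ)) ℙ ∧
        ∫ x, xlog ((dGrpIn g (fun a b => X (a, b) x) r : ℕ) : ℝ) ∂ℙ = Fp (Wi r) := by
    intro r
    have hfun : ∀ x : Ω, (dGrpIn g (fun a b => X (a, b) x) r : ℕ)
        = ∑ p ∈ ((Finset.univ : Finset (Fin n)) ×ˢ fib r), X p x := by
      intro x
      rw [Finset.sum_product]
      show (∑ i ∈ fib r, ∑ j, X (j, i) x) = _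
      rw [Finset.sum_comm]
    have hrate : ∑ p ∈ ((Finset.univ : Finset (Fin n)) ×ˢ fib r), lam p = Wi r := by
      rw [Finset.sum_product]
      have e1 : ∀ i : Fin n, (∑ j ∈ fib r, lam (i, j)) = θo i * ω (g i) r := fun i => hinner i r
      rw [Finset.sum_congr rfl (fun i _ => e1 i)]
      rw [← Finset.sum_fiberwise Finset.univ g (fun i => θo i * ω (g i) r)]
      rw [show Wi r = ∑ s, ω s r from rfl]
      apply Finset.sum_congr rfl
      intro s _
      have e2 : ∀ i ∈ fib s, θo i * ω (g i) r = (ω s r) * θo i := by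
        intro i hi
        have hgi : g i = s := (Finset.mem_filter.mp hi).2
        rw [hgi]; ring
      rw [Finset.sum_congr rfl e2, ← Finset.mul_sum]
      rw [show (∑ i ∈ fib s, θo i) = 1 from hconso s, mul_one]
    rw [show (fun x => xlog ((dGrpIn g (fun a b => X (a, b) x) r : ℕ) : ℝ))
        = (fun x => xlog ((∑ p ∈ ((Finset.univ : Finset (Fin n)) ×ˢ fib r), X p x : ℕ) : ℝ))
      from funext fun x => by rw [hfun x]]
    exact main _ _ hrate
  -- blocks
  have hIpairA : ∀ (i : Fin n) (s : G), Integrable (fun x =>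
      xlog ((dOut g (fun a b => X (a, b) x) i s : ℕ) : ℝ)
        + xlog ((dIn g (fun a b => X (a, b) x) i s : ℕ) : ℝ)) ℙ :=
    fun i s => (HdOut i s).1.add (HdIn i s).1
  have hIpairB : ∀ i : Fin n, Integrable (fun x =>
      xlog ((dTotOut (fun a b => X (a, b) x) i : ℕ) : ℝ)
        + xlog ((dTotIn (fun a b => X (a, b) x) i : ℕ) : ℝ)) ℙ :=
    fun i => (HtotOut i).1.add (HtotIn i).1
  have hIpairC : ∀ (r s : G), Integrable (fun x =>
      2 * xlog ((mEdges g (fun a b => X (a, b) x) r s : ℕ) : ℝ)) ℙ :=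
    fun r s => (Hm r s).1.const_mul 2
  have hIpairD : ∀ r : G, Integrable (fun x =>
      xlog ((dGrpOut g (fun a b => X (a, b) x) r : ℕ) : ℝ)
        + xlog ((dGrpIn g (fun a b => X (a, b) x) r : ℕ) : ℝ)) ℙ :=
    fun r => (HgOut r).1.add (HgIn r).1
  have IntA : Integrable (fun x => ∑ i, ∑ s,
      (xlog ((dOut g (fun a b => X (a, b) x) i s : ℕ) : ℝ)
        + xlog ((dIn g (fun a b => X (a, b) x) i s : ℕ) : ℝ))) ℙ :=
    integrable_finset_sum _ (fun i _ => integrable_finset_sum _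
      (fun s _ => hIpairA i s))
  have IntB : Integrable (fun x => ∑ i,
      (xlog ((dTotOut (fun a b => X (a, b) x) i : ℕ) : ℝ)
        + xlog ((dTotIn (fun a b => X (a, b) x) i : ℕ) : ℝ))) ℙ :=
    integrable_finset_sum _ (fun i _ => hIpairB i)
  have IntC : Integrable (fun x => ∑ r, ∑ s,
      2 * xlog ((mEdges g (fun a b => X (a, b) x) r s : ℕ) : ℝ)) ℙ :=
    integrable_finset_sum _ (fun r _ => integrable_finset_sum _
      (fun s _ => hIpairC r s))
  have IntD : Integrable (fun x => ∑ r,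
      (xlog ((dGrpOut g (fun a b => X (a, b) x) r : ℕ) : ℝ)
        + xlog ((dGrpIn g (fun a b => X (a, b) x) r : ℕ) : ℝ))) ℙ :=
    integrable_finset_sum _ (fun r _ => hIpairD r)
  have EA : ∫ x, (∑ i, ∑ s,
      (xlog ((dOut g (fun a b => X (a, b) x) i s : ℕ) : ℝ)
        + xlog ((dIn g (fun a b => X (a, b) x) i s : ℕ) : ℝ))) ∂ℙ
      = ∑ i, ∑ s, (Fp (θo i * ω (g i) s) + Fp (θi i * ω s (g i))) := by
    rw [integral_finset_sum _ (fun i _ => integrable_finset_sum _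
      (fun s _ => hIpairA i s))]
    refine Finset.sum_congr rfl fun i _ => ?_
    rw [integral_finset_sum _ (fun s _ => hIpairA i s)]
    refine Finset.sum_congr rfl fun s _ => ?_
    rw [integral_add (HdOut i s).1 (HdIn i s).1, (HdOut i s).2, (HdIn i s).2]
  have EB : ∫ x, (∑ i,
      (xlog ((dTotOut (fun a b => X (a, b) x) i : ℕ) : ℝ)
        + xlog ((dTotIn (fun a b => X (a, b) x) i : ℕ) : ℝ))) ∂ℙ
      = ∑ i, (Fp (θo i * Wo (g i)) + Fp (θi i * Wi (g i))) := by
    rw [integral_finset_sum _ (fun i _ => hIpairB i)]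
    refine Finset.sum_congr rfl fun i _ => ?_
    rw [integral_add (HtotOut i).1 (HtotIn i).1, (HtotOut i).2, (HtotIn i).2]
  have EC : ∫ x, (∑ r, ∑ s,
      2 * xlog ((mEdges g (fun a b => X (a, b) x) r s : ℕ) : ℝ)) ∂ℙ
      = ∑ r, ∑ s, 2 * Fp (ω r s) := by
    rw [integral_finset_sum _ (fun r _ => integrable_finset_sum _
      (fun s _ => hIpairC r s))]
    refine Finset.sum_congr rfl fun r _ => ?_
    rw [integral_finset_sum _ (fun s _ => hIpairC r s)]
    refine Finset.sum_congr rfl fun s _ => ?_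
    rw [integral_const_mul, (Hm r s).2]
  have ED : ∫ x, (∑ r,
      (xlog ((dGrpOut g (fun a b => X (a, b) x) r : ℕ) : ℝ)
        + xlog ((dGrpIn g (fun a b => X (a, b) x) r : ℕ) : ℝ))) ∂ℙ
      = ∑ r, (Fp (Wo r) + Fp (Wi r)) := by
    rw [integral_finset_sum _ (fun r _ => hIpairD r)]
    refine Finset.sum_congr rfl fun r _ => ?_
    rw [integral_add (HgOut r).1 (HgIn r).1, (HgOut r).2, (HgIn r).2]
  have Etotal : ∫ x, llrStat g (fun i j => X (i, j) x) ∂ℙ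
      = (∑ i, ∑ s, (Fp (θo i * ω (g i) s) + Fp (θi i * ω s (g i))))
        - (∑ i, (Fp (θo i * Wo (g i)) + Fp (θi i * Wi (g i))))
        - (∑ r, ∑ s, 2 * Fp (ω r s))
        + (∑ r, (Fp (Wo r) + Fp (Wi r))) := by
    have efun : (fun x => llrStat g (fun i j => X (i, j) x))
        = (fun x =>
            (∑ i, ∑ s, (xlog ((dOut g (fun a b => X (a, b) x) i s : ℕ) : ℝ)
              + xlog ((dIn g (fun a b => X (a, b) x) i s : ℕ) : ℝ)))
            - (∑ i, (xlog ((dTotOut (fun a b => X (a, b) x) i : ℕ) : ℝ)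
              + xlog ((dTotIn (fun a b => X (a, b) x) i : ℕ) : ℝ)))
            - (∑ r, ∑ s, 2 * xlog ((mEdges g (fun a b => X (a, b) x) r s : ℕ) : ℝ))
            + (∑ r, (xlog ((dGrpOut g (fun a b => X (a, b) x) r : ℕ) : ℝ)
              + xlog ((dGrpIn g (fun a b => X (a, b) x) r : ℕ) : ℝ)))) := rfl
    have IntAB : Integrable (fun x =>
        (∑ i, ∑ s, (xlog ((dOut g (fun a b => X (a, b) x) i s : ℕ) : ℝ)
          + xlog ((dIn g (fun a b => X (a, b) x) i s : ℕ) : ℝ)))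
        - (∑ i, (xlog ((dTotOut (fun a b => X (a, b) x) i : ℕ) : ℝ)
          + xlog ((dTotIn (fun a b => X (a, b) x) i : ℕ) : ℝ)))) ℙ := IntA.sub IntB
    have IntABC : Integrable (fun x =>
        (∑ i, ∑ s, (xlog ((dOut g (fun a b => X (a, b) x) i s : ℕ) : ℝ)
          + xlog ((dIn g (fun a b => X (a, b) x) i s : ℕ) : ℝ)))
        - (∑ i, (xlog ((dTotOut (fun a b => X (a, b) x) i : ℕ) : ℝ)
          + xlog ((dTotIn (fun a b => X (a, b) x) i : ℕ) : ℝ)))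
        - (∑ r, ∑ s, 2 * xlog ((mEdges g (fun a b => X (a, b) x) r s : ℕ) : ℝ))) ℙ :=
      IntAB.sub IntC
    rw [efun, integral_add IntABC IntD, integral_sub IntAB IntC, integral_sub IntA IntB,
      EA, EB, EC, ED]
  -- error function
  set er : ℝ≥0 → ℝ := fun R => Fp R - (xlog (R:ℝ) + 1/2) with her_def
  have hFp_dec : ∀ R : ℝ≥0, Fp R = xlog (R:ℝ) + 1/2 + er R := by
    intro R; simp only [her_def]; ring
  have her : ∀ R : ℝ≥0, m0 ≤ (R:ℝ) → |er R| ≤ 20000 / m0 := by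
    intro R hR
    have h : |er R| ≤ 20000 / (R:ℝ) := poisson_xlog_est R (hm0.trans hR)
    exact h.trans (div_le_div_of_nonneg_left (by norm_num) (by linarith) hR)
  -- rate lower bounds
  have hθo1 : ∀ i, θo i ≤ 1 := by
    intro i
    rw [← hconso (g i)]
    exact Finset.single_le_sum (fun j _ => zero_le)
      (Finset.mem_filter.mpr ⟨Finset.mem_univ i, rfl⟩)
  have hfib_ne : ∀ r : G, ∃ i, g i = r := by
    intro r
    have h1 := hconso r
    by_contra hc
    push_neg at hc
    have he : (Finset.univ.filter (fun i => g i = r)) = ∅ :=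
      Finset.filter_eq_empty_iff.mpr (fun {i} _ => hc i)
    rw [he, Finset.sum_empty] at h1
    exact one_ne_zero h1.symm
  have homega_ge : ∀ r s, m0 ≤ ((ω r s : ℝ≥0) : ℝ) := by
    intro r s
    obtain ⟨i, hi⟩ := hfib_ne r
    have h1 := hmino i s
    rw [hi] at h1
    refine h1.trans ?_
    have h2 : θo i * ω r s ≤ 1 * ω r s := mul_le_mul_of_nonneg_right (hθo1 i) (zero_le)
    rw [one_mul] at h2
    exact_mod_cast h2
  have hWo_ge : ∀ r, m0 ≤ ((Wo r : ℝ≥0) : ℝ) := by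
    intro r
    have s0 : G := Classical.arbitrary G
    refine (homega_ge r s0).trans ?_
    have h2 : ω r s0 ≤ Wo r := Finset.single_le_sum (f := fun s => ω r s)
      (fun s _ => zero_le) (Finset.mem_univ s0)
    exact_mod_cast h2
  have hWi_ge : ∀ r, m0 ≤ ((Wi r : ℝ≥0) : ℝ) := by
    intro r
    have s0 : G := Classical.arbitrary G
    refine (homega_ge s0 r).trans ?_
    have h2 : ω s0 r ≤ Wi r := Finset.single_le_sum (f := fun s => ω s r)
      (fun s _ => zero_le) (Finset.mem_univ s0)
    exact_mod_cast h2
  have hLo_ge : ∀ i, m0 ≤ ((θo i * Wo (g i) : ℝ≥0) : ℝ) := by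
    intro i
    have s0 : G := Classical.arbitrary G
    refine (hmino i s0).trans ?_
    have h2 : θo i * ω (g i) s0 ≤ θo i * Wo (g i) :=
      mul_le_mul_of_nonneg_left (Finset.single_le_sum (f := fun s => ω (g i) s)
        (fun s _ => zero_le) (Finset.mem_univ s0)) (zero_le)
    exact_mod_cast h2
  have hLi_ge : ∀ i, m0 ≤ ((θi i * Wi (g i) : ℝ≥0) : ℝ) := by
    intro i
    have s0 : G := Classical.arbitrary G
    refine (hmini i s0).trans ?_
    have h2 : θi i * ω s0 (g i) ≤ θi i * Wi (g i) :=
      mul_le_mul_of_nonneg_left (Finset.single_le_sum (f := fun s => ω s (g i))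
        (fun s _ => zero_le) (Finset.mem_univ s0)) (zero_le)
    exact_mod_cast h2
  -- decompositions
  have decompA : (∑ i, ∑ s, (Fp (θo i * ω (g i) s) + Fp (θi i * ω s (g i))))
      = (∑ i, ∑ s, (xlog ((θo i * ω (g i) s : ℝ≥0) : ℝ)
          + xlog ((θi i * ω s (g i) : ℝ≥0) : ℝ)))
        + (n:ℝ) * (Fintype.card G : ℝ)
        + (∑ i, ∑ s, (er (θo i * ω (g i) s) + er (θi i * ω s (g i)))) := by
    have h1 : ∀ i : Fin n, (∑ s, (Fp (θo i * ω (g i) s) + Fp (θi i * ω s (g i))))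
        = (∑ s, (xlog ((θo i * ω (g i) s : ℝ≥0) : ℝ) + xlog ((θi i * ω s (g i) : ℝ≥0) : ℝ)))
          + (Fintype.card G : ℝ)
          + (∑ s, (er (θo i * ω (g i) s) + er (θi i * ω s (g i)))) := by
      intro i
      have := sum_decomp (fun s => Fp (θo i * ω (g i) s) + Fp (θi i * ω s (g i)))
        (fun s => xlog ((θo i * ω (g i) s : ℝ≥0) : ℝ) + xlog ((θi i * ω s (g i) : ℝ≥0) : ℝ))
        (fun s => er (θo i * ω (g i) s) + er (θi i * ω s (g i))) 1
        (fun s => by beta_reduce; rw [hFp_dec, hFp_dec]; ring)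
      beta_reduce at this
      rw [this]; ring
    have := sum_decomp (fun i => ∑ s, (Fp (θo i * ω (g i) s) + Fp (θi i * ω s (g i))))
      (fun i => ∑ s, (xlog ((θo i * ω (g i) s : ℝ≥0) : ℝ) + xlog ((θi i * ω s (g i) : ℝ≥0) : ℝ)))
      (fun i => ∑ s, (er (θo i * ω (g i) s) + er (θi i * ω s (g i)))) (Fintype.card G : ℝ)
      (fun i => by beta_reduce; rw [h1 i])
    beta_reduce at this
    rw [this, Fintype.card_fin]; ring
  have decompB : (∑ i, (Fp (θo i * Wo (g i)) + Fp (θi i * Wi (g i))))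
      = (∑ i, (xlog ((θo i * Wo (g i) : ℝ≥0) : ℝ) + xlog ((θi i * Wi (g i) : ℝ≥0) : ℝ)))
        + (n:ℝ)
        + (∑ i, (er (θo i * Wo (g i)) + er (θi i * Wi (g i)))) := by
    have := sum_decomp (fun i => Fp (θo i * Wo (g i)) + Fp (θi i * Wi (g i)))
      (fun i => xlog ((θo i * Wo (g i) : ℝ≥0) : ℝ) + xlog ((θi i * Wi (g i) : ℝ≥0) : ℝ))
      (fun i => er (θo i * Wo (g i)) + er (θi i * Wi (g i))) 1
      (fun i => by beta_reduce; rw [hFp_dec, hFp_dec]; ring)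
    beta_reduce at this
    rw [this, Fintype.card_fin]; ring
  have decompC : (∑ r, ∑ s, 2 * Fp (ω r s))
      = (∑ r, ∑ s, 2 * xlog ((ω r s : ℝ≥0) : ℝ))
        + (Fintype.card G : ℝ) * (Fintype.card G : ℝ)
        + (∑ r, ∑ s, 2 * er (ω r s)) := by
    have h1 : ∀ r : G, (∑ s, 2 * Fp (ω r s))
        = (∑ s, 2 * xlog ((ω r s : ℝ≥0) : ℝ)) + (Fintype.card G : ℝ)
          + (∑ s, 2 * er (ω r s)) := by
      intro r
      have := sum_decomp (fun s => 2 * Fp (ω r s))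
        (fun s => 2 * xlog ((ω r s : ℝ≥0) : ℝ))
        (fun s => 2 * er (ω r s)) 1
        (fun s => by beta_reduce; rw [hFp_dec]; ring)
      beta_reduce at this
      rw [this]; ring
    have := sum_decomp (fun r => ∑ s, 2 * Fp (ω r s))
      (fun r => ∑ s, 2 * xlog ((ω r s : ℝ≥0) : ℝ))
      (fun r => ∑ s, 2 * er (ω r s)) (Fintype.card G : ℝ)
      (fun r => by beta_reduce; rw [h1 r])
    beta_reduce at this
    rw [this]; ring
  have decompD : (∑ r, (Fp (Wo r) + Fp (Wi r)))
      = (∑ r, (xlog ((Wo r : ℝ≥0) : ℝ) + xlog ((Wi r : ℝ≥0) : ℝ)))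
        + (Fintype.card G : ℝ)
        + (∑ r, (er (Wo r) + er (Wi r))) := by
    have := sum_decomp (fun r => Fp (Wo r) + Fp (Wi r))
      (fun r => xlog ((Wo r : ℝ≥0) : ℝ) + xlog ((Wi r : ℝ≥0) : ℝ))
      (fun r => er (Wo r) + er (Wi r)) 1
      (fun r => by beta_reduce; rw [hFp_dec, hFp_dec]; ring)
    beta_reduce at this
    rw [this]; ring
  -- cancellation of the xlog parts
  have hout := alg_cancel g (fun i => (θo i : ℝ)) (fun r s => ((ω r s : ℝ≥0) : ℝ))
    (fun i => by exact_mod_cast hθo i) (fun r s => by exact_mod_cast hω r s)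
    (fun r => by exact_mod_cast hconso r)
  have hin := alg_cancel g (fun i => (θi i : ℝ)) (fun r s => ((ω s r : ℝ≥0) : ℝ))
    (fun i => by exact_mod_cast hθi i) (fun r s => by exact_mod_cast hω s r)
    (fun r => by exact_mod_cast hconsi r)
  have hXA : (∑ i, ∑ s, (xlog ((θo i * ω (g i) s : ℝ≥0) : ℝ)
        + xlog ((θi i * ω s (g i) : ℝ≥0) : ℝ)))
      = (∑ i, ∑ s, xlog ((θo i : ℝ) * ((ω (g i) s : ℝ≥0) : ℝ)))
        + (∑ i, ∑ s, xlog ((θi i : ℝ) * ((ω s (g i) : ℝ≥0) : ℝ))) := by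
    rw [← Finset.sum_add_distrib]
    refine Finset.sum_congr rfl fun i _ => ?_
    rw [← Finset.sum_add_distrib]
    refine Finset.sum_congr rfl fun s _ => ?_
    push_cast
    ring
  have hXB : (∑ i, (xlog ((θo i * Wo (g i) : ℝ≥0) : ℝ) + xlog ((θi i * Wi (g i) : ℝ≥0) : ℝ)))
      = (∑ i, xlog ((θo i : ℝ) * ∑ s, ((ω (g i) s : ℝ≥0) : ℝ)))
        + (∑ i, xlog ((θi i : ℝ) * ∑ s, ((ω s (g i) : ℝ≥0) : ℝ))) := by
    rw [← Finset.sum_add_distrib]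
    refine Finset.sum_congr rfl fun i _ => ?_
    simp only [hWo, hWi]
    push_cast
    ring
  have hXC : (∑ r, ∑ s, 2 * xlog ((ω r s : ℝ≥0) : ℝ))
      = (∑ r, ∑ s, xlog ((ω r s : ℝ≥0) : ℝ)) + (∑ r, ∑ s, xlog ((ω s r : ℝ≥0) : ℝ)) := by
    rw [show (∑ r, ∑ s, xlog ((ω s r : ℝ≥0) : ℝ)) = ∑ r, ∑ s, xlog ((ω r s : ℝ≥0) : ℝ)
      from Finset.sum_comm]
    rw [← Finset.sum_add_distrib]
    refine Finset.sum_congr rfl fun r _ => ?_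
    rw [← Finset.sum_add_distrib]
    refine Finset.sum_congr rfl fun s _ => ?_
    ring
  have hXD : (∑ r, (xlog ((Wo r : ℝ≥0) : ℝ) + xlog ((Wi r : ℝ≥0) : ℝ)))
      = (∑ r, xlog (∑ s, ((ω r s : ℝ≥0) : ℝ))) + (∑ r, xlog (∑ s, ((ω s r : ℝ≥0) : ℝ))) := by
    rw [← Finset.sum_add_distrib]
    refine Finset.sum_congr rfl fun r _ => ?_
    simp only [hWo, hWi]
    push_cast
    ring
  have hX0 : (∑ i, ∑ s, (xlog ((θo i * ω (g i) s : ℝ≥0) : ℝ)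
        + xlog ((θi i * ω s (g i) : ℝ≥0) : ℝ)))
      - (∑ i, (xlog ((θo i * Wo (g i) : ℝ≥0) : ℝ) + xlog ((θi i * Wi (g i) : ℝ≥0) : ℝ)))
      - (∑ r, ∑ s, 2 * xlog ((ω r s : ℝ≥0) : ℝ))
      + (∑ r, (xlog ((Wo r : ℝ≥0) : ℝ) + xlog ((Wi r : ℝ≥0) : ℝ))) = 0 := by
    rw [hXA, hXB, hXC, hXD]
    linarith [hout, hin]
  -- bounds on the error parts
  have habs2 : ∀ a b : ℝ≥0, m0 ≤ ((a : ℝ≥0) : ℝ) → m0 ≤ ((b : ℝ≥0) : ℝ) →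
      |er a + er b| ≤ 2 * (20000 / m0) := by
    intro a b ha hb
    calc |er a + er b| ≤ |er a| + |er b| := abs_add_le _ _
      _ ≤ 20000/m0 + 20000/m0 := add_le_add (her a ha) (her b hb)
      _ = 2 * (20000/m0) := by ring
  have hRA : |∑ i, ∑ s, (er (θo i * ω (g i) s) + er (θi i * ω s (g i)))|
      ≤ (n:ℝ) * (Fintype.card G : ℝ) * (2 * (20000/m0)) := by
    calc |∑ i, ∑ s, (er (θo i * ω (g i) s) + er (θi i * ω s (g i)))|
        ≤ ∑ i, |∑ s, (er (θo i * ω (g i) s) + er (θi i * ω s (g i)))| :=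
          Finset.abs_sum_le_sum_abs _ _
      _ ≤ ∑ _i : Fin n, ((Fintype.card G : ℝ) * (2 * (20000/m0))) := by
          refine Finset.sum_le_sum fun i _ => ?_
          calc |∑ s, (er (θo i * ω (g i) s) + er (θi i * ω s (g i)))|
              ≤ ∑ s, |er (θo i * ω (g i) s) + er (θi i * ω s (g i))| :=
                Finset.abs_sum_le_sum_abs _ _
            _ ≤ ∑ _s : G, (2 * (20000/m0)) :=
                Finset.sum_le_sum fun s _ => habs2 _ _ (hmino i s) (hmini i s)
            _ = (Fintype.card G : ℝ) * (2 * (20000/m0)) := by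
                rw [Finset.sum_const, nsmul_eq_mul, Finset.card_univ]
      _ = (n:ℝ) * ((Fintype.card G : ℝ) * (2 * (20000/m0))) := by
          rw [Finset.sum_const, nsmul_eq_mul, Finset.card_univ, Fintype.card_fin]
      _ = (n:ℝ) * (Fintype.card G : ℝ) * (2 * (20000/m0)) := by ring
  have hRB : |∑ i, (er (θo i * Wo (g i)) + er (θi i * Wi (g i)))|
      ≤ (n:ℝ) * (2 * (20000/m0)) := by
    calc |∑ i, (er (θo i * Wo (g i)) + er (θi i * Wi (g i)))|
        ≤ ∑ i, |er (θo i * Wo (g i)) + er (θi i * Wi (g i))| :=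
          Finset.abs_sum_le_sum_abs _ _
      _ ≤ ∑ _i : Fin n, (2 * (20000/m0)) :=
          Finset.sum_le_sum fun i _ => habs2 _ _ (hLo_ge i) (hLi_ge i)
      _ = (n:ℝ) * (2 * (20000/m0)) := by
          rw [Finset.sum_const, nsmul_eq_mul, Finset.card_univ, Fintype.card_fin]
  have hRC : |∑ r, ∑ s, 2 * er (ω r s)|
      ≤ (Fintype.card G : ℝ) * (Fintype.card G : ℝ) * (2 * (20000/m0)) := by
    calc |∑ r, ∑ s, 2 * er (ω r s)| ≤ ∑ r, |∑ s, 2 * er (ω r s)| :=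
          Finset.abs_sum_le_sum_abs _ _
      _ ≤ ∑ _r : G, ((Fintype.card G : ℝ) * (2 * (20000/m0))) := by
          refine Finset.sum_le_sum fun r _ => ?_
          calc |∑ s, 2 * er (ω r s)| ≤ ∑ s, |2 * er (ω r s)| :=
                Finset.abs_sum_le_sum_abs _ _
            _ ≤ ∑ _s : G, (2 * (20000/m0)) := by
                refine Finset.sum_le_sum fun s _ => ?_
                rw [abs_mul, abs_two]
                have := her (ω r s) (homega_ge r s)
                linarith
            _ = (Fintype.card G : ℝ) * (2 * (20000/m0)) := by
                rw [Finset.sum_const, nsmul_eq_mul, Finset.card_univ]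
      _ = (Fintype.card G : ℝ) * ((Fintype.card G : ℝ) * (2 * (20000/m0))) := by
          rw [Finset.sum_const, nsmul_eq_mul, Finset.card_univ]
      _ = (Fintype.card G : ℝ) * (Fintype.card G : ℝ) * (2 * (20000/m0)) := by ring
  have hRD : |∑ r, (er (Wo r) + er (Wi r))|
      ≤ (Fintype.card G : ℝ) * (2 * (20000/m0)) := by
    calc |∑ r, (er (Wo r) + er (Wi r))| ≤ ∑ r, |er (Wo r) + er (Wi r)| :=
          Finset.abs_sum_le_sum_abs _ _
      _ ≤ ∑ _r : G, (2 * (20000/m0)) :=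
          Finset.sum_le_sum fun r _ => habs2 _ _ (hWo_ge r) (hWi_ge r)
      _ = (Fintype.card G : ℝ) * (2 * (20000/m0)) := by
          rw [Finset.sum_const, nsmul_eq_mul, Finset.card_univ]
  -- final
  have final_eq : (∫ x, llrStat g (fun i j => X (i, j) x) ∂ℙ)
      - ((Fintype.card G : ℝ) - 1) * ((n : ℝ) - (Fintype.card G : ℝ))
      = (∑ i, ∑ s, (er (θo i * ω (g i) s) + er (θi i * ω s (g i))))
        - (∑ i, (er (θo i * Wo (g i)) + er (θi i * Wi (g i))))
        - (∑ r, ∑ s, 2 * er (ω r s))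
        + (∑ r, (er (Wo r) + er (Wi r))) := by
    rw [Etotal, decompA, decompB, decompC, decompD]
    have hcnt : (n:ℝ) * (Fintype.card G : ℝ) - (n:ℝ)
        - (Fintype.card G : ℝ) * (Fintype.card G : ℝ) + (Fintype.card G : ℝ)
        - ((Fintype.card G : ℝ) - 1) * ((n : ℝ) - (Fintype.card G : ℝ)) = 0 := by ring
    linarith [hX0, hcnt]
  rw [final_eq]
  have habs_sub : ∀ x y : ℝ, |x - y| ≤ |x| + |y| := by
    intro x y
    calc |x - y| = |x + -y| := by rw [sub_eq_add_neg]
      _ ≤ |x| + |-y| := abs_add_le _ _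
      _ = |x| + |y| := by rw [abs_neg]
  calc |(∑ i, ∑ s, (er (θo i * ω (g i) s) + er (θi i * ω s (g i))))
        - (∑ i, (er (θo i * Wo (g i)) + er (θi i * Wi (g i))))
        - (∑ r, ∑ s, 2 * er (ω r s))
        + (∑ r, (er (Wo r) + er (Wi r)))|
      ≤ |(∑ i, ∑ s, (er (θo i * ω (g i) s) + er (θi i * ω s (g i))))
          - (∑ i, (er (θo i * Wo (g i)) + er (θi i * Wi (g i))))
          - (∑ r, ∑ s, 2 * er (ω r s))|
        + |∑ r, (er (Wo r) + er (Wi r))| := abs_add_le _ _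
    _ ≤ (|(∑ i, ∑ s, (er (θo i * ω (g i) s) + er (θi i * ω s (g i))))
          - (∑ i, (er (θo i * Wo (g i)) + er (θi i * Wi (g i))))|
        + |∑ r, ∑ s, 2 * er (ω r s)|)
        + |∑ r, (er (Wo r) + er (Wi r))| := by
        have := habs_sub ((∑ i, ∑ s, (er (θo i * ω (g i) s) + er (θi i * ω s (g i))))
          - (∑ i, (er (θo i * Wo (g i)) + er (θi i * Wi (g i)))))
          (∑ r, ∑ s, 2 * er (ω r s))
        linarith
    _ ≤ ((|∑ i, ∑ s, (er (θo i * ω (g i) s) + er (θi i * ω s (g i)))|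
          + |∑ i, (er (θo i * Wo (g i)) + er (θi i * Wi (g i)))|)
        + |∑ r, ∑ s, 2 * er (ω r s)|)
        + |∑ r, (er (Wo r) + er (Wi r))| := by
        have := habs_sub (∑ i, ∑ s, (er (θo i * ω (g i) s) + er (θi i * ω s (g i))))
          (∑ i, (er (θo i * Wo (g i)) + er (θi i * Wi (g i))))
        linarith
    _ ≤ (2*(n:ℝ)*(Fintype.card G : ℝ) + 2*(n:ℝ) + 2*(Fintype.card G : ℝ)^2
          + 2*(Fintype.card G : ℝ)) * (20000 / m0) := by
        have h1 := hRA
        have h2 := hRB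
        have h3 := hRC
        have h4 := hRD
        nlinarith [h1, h2, h3, h4]

end KeyStep

/-- Theorem 1 of the paper: in the dense regime where every expected
group-degree grows faster than the number of nodes, the expected log-likelihood ratio
under the DCSBM null approaches `(|G| − 1)(|N_n| − |G|)`. -/
theorem expectation_llrStat_dense_limit
    {Ω : Type*} [MeasureSpace Ω] [IsProbabilityMeasure (ℙ : Measure Ω)]
    {G : Type*} [Fintype G] [DecidableEq G] [Nonempty G]
    (Nn : ℕ → ℕ)
    (g : (n : ℕ) → Fin (Nn n) → G)
    (θo θi : (n : ℕ) → Fin (Nn n) → ℝ≥0) (ω : ℕ → G → G → ℝ≥0)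
    (A : (n : ℕ) → Fin (Nn n) → Fin (Nn n) → Ω → ℕ)
    (hθo : ∀ n i, 0 < θo n i) (hθi : ∀ n i, 0 < θi n i)
    (hω : ∀ n r s, 0 < ω n r s)
    (hconso : ∀ n (r : G),
      ∑ i ∈ Finset.univ.filter (fun i => g n i = r), θo n i = 1)
    (hconsi : ∀ n (r : G),
      ∑ i ∈ Finset.univ.filter (fun i => g n i = r), θi n i = 1)
    (hindep : ∀ n, iIndepFun
      (fun p : Fin (Nn n) × Fin (Nn n) => A n p.1 p.2) ℙ)
    (hdist : ∀ n (i j : Fin (Nn n)), Measure.map (A n i j) ℙ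
      = poissonMeasure (θo n i * θi n j * ω n (g n i) (g n j)))
    (hsize : Tendsto (fun n => Nn n) atTop atTop)
    (hdense : Tendsto
      (fun n : ℕ => (Nn n : ℝ) /
        ⨅ p : Fin (Nn n) × G,
          min ((θo n p.1 * ω n (g n p.1) p.2 : ℝ≥0) : ℝ)
              ((θi n p.1 * ω n p.2 (g n p.1) : ℝ≥0) : ℝ))
      atTop (nhds 0)) :
    Tendsto
      (fun n : ℕ => (∫ x, llrStat (g n) (fun i j => A n i j x) ∂ℙ)
        - ((Fintype.card G : ℝ) - 1) * ((Nn n : ℝ) - (Fintype.card G : ℝ)))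
      atTop (nhds 0) := by
  classical
  -- almost-everywhere measurability of the entries
  have hAem : ∀ n (i j : Fin (Nn n)), AEMeasurable (A n i j) ℙ := by
    intro n i j
    by_contra hc
    have h0 := hdist n i j
    rw [Measure.map_of_not_aemeasurable hc] at h0
    have h1 : (poissonMeasure (θo n i * θi n j * ω n (g n i) (g n j))) Set.univ = 0 := by
      rw [← h0]; simp
    rw [measure_univ] at h1
    exact one_ne_zero h1
  -- measurable modifications
  have hXmeas : ∀ n (p : Fin (Nn n) × Fin (Nn n)),
      Measurable ((hAem n p.1 p.2).mk (A n p.1 p.2)) :=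
    fun n p => (hAem n p.1 p.2).measurable_mk
  have hXae : ∀ n (p : Fin (Nn n) × Fin (Nn n)),
      A n p.1 p.2 =ᵐ[ℙ] (hAem n p.1 p.2).mk (A n p.1 p.2) :=
    fun n p => (hAem n p.1 p.2).ae_eq_mk
  have hXind : ∀ n, iIndepFun
      (fun p : Fin (Nn n) × Fin (Nn n) => (hAem n p.1 p.2).mk (A n p.1 p.2)) ℙ :=
    fun n => iIndepFun_congr_ae (hindep n) (fun p => hXae n p)
  have hXlaw : ∀ n (p : Fin (Nn n) × Fin (Nn n)),
      (ℙ : Measure Ω).map ((hAem n p.1 p.2).mk (A n p.1 p.2))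
        = poissonMeasure (θo n p.1 * θi n p.2 * ω n (g n p.1) (g n p.2)) := by
    intro n p
    rw [← Measure.map_congr (hXae n p)]
    exact hdist n p.1 p.2
  -- the integrals agree
  have hint_eq : ∀ n, ∫ x, llrStat (g n) (fun i j => A n i j x) ∂ℙ
      = ∫ x, llrStat (g n) (fun i j => (hAem n (i, j).1 (i, j).2).mk (A n (i, j).1 (i, j).2) x) ∂ℙ := by
    intro n
    apply integral_congr_ae
    have hall : ∀ᵐ x ∂ℙ, ∀ p : Fin (Nn n) × Fin (Nn n),
        A n p.1 p.2 x = (hAem n p.1 p.2).mk (A n p.1 p.2) x :=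
      ae_all_iff.mpr (fun p => hXae n p)
    filter_upwards [hall] with x hx
    have e : (fun i j => A n i j x)
        = (fun i j => (hAem n (i, j).1 (i, j).2).mk (A n (i, j).1 (i, j).2) x) :=
      funext fun i => funext fun j => hx (i, j)
    rw [e]
  -- fibers are nonempty
  have hfibne : ∀ n (r : G), ∃ i : Fin (Nn n), g n i = r := by
    intro n r
    have h1 := hconso n r
    by_contra hc
    push_neg at hc
    have he : (Finset.univ.filter (fun i => g n i = r)) = ∅ :=
      Finset.filter_eq_empty_iff.mpr (fun {i} _ => hc i)
    rw [he, Finset.sum_empty] at h1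
    exact one_ne_zero h1.symm
  have hNpos : ∀ n, 0 < Nn n := by
    intro n
    obtain ⟨i, _⟩ := hfibne n (Classical.arbitrary G)
    exact i.pos
  -- the minimal rate
  set m : ℕ → ℝ := fun n => ⨅ p : Fin (Nn n) × G,
      min ((θo n p.1 * ω n (g n p.1) p.2 : ℝ≥0) : ℝ)
          ((θi n p.1 * ω n p.2 (g n p.1) : ℝ≥0) : ℝ) with hmdef
  have hmle : ∀ n (i : Fin (Nn n)) (s : G),
      m n ≤ ((θo n i * ω n (g n i) s : ℝ≥0) : ℝ)
        ∧ m n ≤ ((θi n i * ω n s (g n i) : ℝ≥0) : ℝ) := by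
    intro n i s
    have hbdd : BddBelow (Set.range fun p : Fin (Nn n) × G =>
        min ((θo n p.1 * ω n (g n p.1) p.2 : ℝ≥0) : ℝ)
            ((θi n p.1 * ω n p.2 (g n p.1) : ℝ≥0) : ℝ)) :=
      (Set.finite_range _).bddBelow
    have h1 := ciInf_le hbdd (i, s)
    exact ⟨h1.trans (min_le_left _ _), h1.trans (min_le_right _ _)⟩
  have hmpos : ∀ n, 0 < m n := by
    intro n
    haveI : Nonempty (Fin (Nn n)) := ⟨⟨0, hNpos n⟩⟩
    obtain ⟨p0, hp0⟩ := Finite.exists_min (fun p : Fin (Nn n) × G =>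
      min ((θo n p.1 * ω n (g n p.1) p.2 : ℝ≥0) : ℝ)
          ((θi n p.1 * ω n p.2 (g n p.1) : ℝ≥0) : ℝ))
    have hbdd : BddBelow (Set.range fun p : Fin (Nn n) × G =>
        min ((θo n p.1 * ω n (g n p.1) p.2 : ℝ≥0) : ℝ)
            ((θi n p.1 * ω n p.2 (g n p.1) : ℝ≥0) : ℝ)) :=
      (Set.finite_range _).bddBelow
    have heq : m n = min ((θo n p0.1 * ω n (g n p0.1) p0.2 : ℝ≥0) : ℝ)
        ((θi n p0.1 * ω n p0.2 (g n p0.1) : ℝ≥0) : ℝ) :=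
      le_antisymm (ciInf_le hbdd p0) (le_ciInf hp0)
    rw [heq]
    apply lt_min
    · exact_mod_cast mul_pos (hθo n p0.1) (hω n _ _)
    · exact_mod_cast mul_pos (hθi n p0.1) (hω n _ _)
  have hev2 : ∀ᶠ n in atTop, 2 ≤ m n := by
    have h2 : ∀ᶠ n in atTop, (Nn n : ℝ) / m n < 1/2 :=
      hdense.eventually (gt_mem_nhds (by norm_num : (0:ℝ) < 1/2))
    filter_upwards [h2] with n hn
    have hN1 : (1:ℝ) ≤ (Nn n : ℝ) := by exact_mod_cast hNpos n
    have hp := hmpos n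
    rw [div_lt_iff₀ hp] at hn
    linarith
  -- squeeze
  have hb : ∀ᶠ n in atTop,
      ‖(∫ x, llrStat (g n) (fun i j => A n i j x) ∂ℙ)
        - ((Fintype.card G : ℝ) - 1) * ((Nn n : ℝ) - (Fintype.card G : ℝ))‖
      ≤ (20000 * (2*(Fintype.card G:ℝ) + 2 + 2*(Fintype.card G:ℝ)^2
          + 2*(Fintype.card G:ℝ))) * ((Nn n : ℝ) / m n) := by
    filter_upwards [hev2] with n hn
    rw [Real.norm_eq_abs, hint_eq n]
    have hkey := key_step (g n) (θo n) (θi n) (ω n) (hθo n) (hθi n) (hω n)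
      (hconso n) (hconsi n)
      (fun p : Fin (Nn n) × Fin (Nn n) => (hAem n p.1 p.2).mk (A n p.1 p.2))
      (hXmeas n) (hXind n) (hXlaw n) hn
      (fun i s => (hmle n i s).1) (fun i s => (hmle n i s).2)
    refine hkey.trans ?_
    have hN1 : (1:ℝ) ≤ (Nn n : ℝ) := by exact_mod_cast hNpos n
    have hp := hmpos n
    have hK0 : (0:ℝ) ≤ (Fintype.card G : ℝ) := by positivity
    have hinv : (0:ℝ) ≤ (m n)⁻¹ := le_of_lt (inv_pos.mpr hp)
    have hcoef : (2*(Nn n:ℝ)*(Fintype.card G:ℝ) + 2*(Nn n:ℝ) + 2*(Fintype.card G:ℝ)^2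
        + 2*(Fintype.card G:ℝ)) * 20000
        ≤ (20000 * (2*(Fintype.card G:ℝ) + 2 + 2*(Fintype.card G:ℝ)^2
          + 2*(Fintype.card G:ℝ))) * (Nn n:ℝ) := by
      nlinarith [hN1, hK0, sq_nonneg ((Fintype.card G:ℝ))]
    calc (2*(Nn n:ℝ)*(Fintype.card G:ℝ) + 2*(Nn n:ℝ) + 2*(Fintype.card G:ℝ)^2
          + 2*(Fintype.card G:ℝ)) * (20000 / m n)
        = ((2*(Nn n:ℝ)*(Fintype.card G:ℝ) + 2*(Nn n:ℝ) + 2*(Fintype.card G:ℝ)^2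
          + 2*(Fintype.card G:ℝ)) * 20000) * (m n)⁻¹ := by
          rw [div_eq_mul_inv]; ring
      _ ≤ ((20000 * (2*(Fintype.card G:ℝ) + 2 + 2*(Fintype.card G:ℝ)^2
          + 2*(Fintype.card G:ℝ))) * (Nn n:ℝ)) * (m n)⁻¹ :=
          mul_le_mul_of_nonneg_right hcoef hinv
      _ = (20000 * (2*(Fintype.card G:ℝ) + 2 + 2*(Fintype.card G:ℝ)^2
          + 2*(Fintype.card G:ℝ))) * ((Nn n : ℝ) / m n) := by
          rw [div_eq_mul_inv]; ring
  have hlim : Tendsto (fun n => (20000 * (2*(Fintype.card G:ℝ) + 2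
      + 2*(Fintype.card G:ℝ)^2 + 2*(Fintype.card G:ℝ))) * ((Nn n : ℝ) / m n))
      atTop (nhds 0) := by
    have h := hdense.const_mul (20000 * (2*(Fintype.card G:ℝ) + 2
      + 2*(Fintype.card G:ℝ)^2 + 2*(Fintype.card G:ℝ)))
    simpa [hmdef] using h
  exact squeeze_zero_norm' hb hlim
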